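/- Let H be a group and C a subgroup of the center of H such that A := H/C is abelian, with quotient map π : H → A. Then the map σ ↦ q_σ, where q_σ(h) := h·σ(h) (which lies in C since π(h·σ(h)) = 1), is a bijection from the set of symmetric structures on H onto the set of functions q : H → C satisfying: (i) q(c) = c² for all c ∈ C, and (ii) q(h₁·h₂) = q(h₁)·q(h₂)·⁅h₁,h₂⁆ for all h₁,h₂ ∈ H, where ⁅h₁,h₂⁆ = h₁h₂h₁⁻¹h₂⁻¹ is the commutator (which lies in C since A is abelian). The inverse bijection sends q to the map σ_q(h) := q(h)·h⁻¹. -/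

import Mathlib

/-- A symmetric structure on a central extension `H` of the abelian group `A = H/C`
by `C`: an automorphism `σ` of `H` with `σ ∘ σ = id`, fixing `C` pointwise and
inducing inversion on `A = H/C`. -/
def IsSymmStruct {H : Type*} [Group H] (C : Subgroup H) [C.Normal] (σ : H ≃* H) : Prop :=
  (∀ h : H, σ (σ h) = h) ∧ (∀ c ∈ C, σ c = c) ∧
    ∀ h : H, (QuotientGroup.mk (σ h) : H ⧸ C) = (QuotientGroup.mk h)⁻¹

open scoped commutatorElement

/-- The property of a function `q : H → C` (recorded as a function `H → H` with values
in `C`): `q(c) = c²` for `c ∈ C`, and `q(h₁h₂) = q(h₁)·q(h₂)·⁅h₁,h₂⁆`, where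
`⁅h₁,h₂⁆ = h₁h₂h₁⁻¹h₂⁻¹` is the commutator. -/
def IsQMap {H : Type*} [Group H] (C : Subgroup H) (q : H → H) : Prop :=
  (∀ h : H, q h ∈ C) ∧ (∀ c ∈ C, q c = c ^ 2) ∧
    ∀ h₁ h₂ : H, q (h₁ * h₂) = q h₁ * q h₂ * ⁅h₁, h₂⁆

namespace SymmQAux

variable {H : Type*} [Group H] {C : Subgroup H}

lemma q_one {q : H → H} (hq : IsQMap C q) : q 1 = 1 := by
  have h := hq.2.1 1 C.one_mem
  simpa using h

lemma comm_self_inv (h : H) : ⁅h, h⁻¹⁆ = 1 := by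
  rw [commutatorElement_def]; group

lemma q_inv {q : H → H} (hq : IsQMap C q) (h : H) : q h⁻¹ = (q h)⁻¹ := by
  have h1 := hq.2.2 h h⁻¹
  rw [mul_inv_cancel, q_one hq, comm_self_inv, mul_one] at h1
  exact eq_inv_of_mul_eq_one_right h1.symm

/-- The automorphism `σ_q(h) = q(h) h⁻¹` built from a quadratic map `q`. -/
def sigmaOfQ (hC : C ≤ Subgroup.center H) (hcomm : ∀ a b : H, ⁅a, b⁆ ∈ C)
    (q : H → H) (hq : IsQMap C q) : H ≃* H where
  toFun h := q h * h⁻¹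
  invFun h := q h * h⁻¹
  left_inv h := by
    have hcen : ∀ x ∈ C, ∀ y : H, x * y = y * x := fun x hx y =>
      (Subgroup.mem_center_iff.mp (hC hx) y).symm
    have hz : ⁅q h, h⁻¹⁆ = 1 :=
      commutatorElement_eq_one_iff_mul_comm.mpr (hcen _ (hq.1 h) h⁻¹)
    have e : q h * h = h * q h := hcen _ (hq.1 h) h
    show q (q h * h⁻¹) * (q h * h⁻¹)⁻¹ = h
    rw [hq.2.2, hq.2.1 _ (hq.1 h), q_inv hq, hz, mul_one, sq, mul_inv_rev, inv_inv,
      mul_assoc (q h), mul_inv_cancel, mul_one, ← mul_assoc, e, mul_assoc,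
      mul_inv_cancel, mul_one]
  right_inv h := by
    have hcen : ∀ x ∈ C, ∀ y : H, x * y = y * x := fun x hx y =>
      (Subgroup.mem_center_iff.mp (hC hx) y).symm
    have hz : ⁅q h, h⁻¹⁆ = 1 :=
      commutatorElement_eq_one_iff_mul_comm.mpr (hcen _ (hq.1 h) h⁻¹)
    have e : q h * h = h * q h := hcen _ (hq.1 h) h
    show q (q h * h⁻¹) * (q h * h⁻¹)⁻¹ = h
    rw [hq.2.2, hq.2.1 _ (hq.1 h), q_inv hq, hz, mul_one, sq, mul_inv_rev, inv_inv,
      mul_assoc (q h), mul_inv_cancel, mul_one, ← mul_assoc, e, mul_assoc,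
      mul_inv_cancel, mul_one]
  map_mul' a b := by
    have hcen : ∀ x ∈ C, ∀ y : H, x * y = y * x := fun x hx y =>
      (Subgroup.mem_center_iff.mp (hC hx) y).symm
    show q (a * b) * (a * b)⁻¹ = (q a * a⁻¹) * (q b * b⁻¹)
    have e1 : ⁅a, b⁆ * (b⁻¹ * a⁻¹) = (b⁻¹ * a⁻¹) * ⁅a, b⁆ := hcen _ (hcomm a b) _
    have e2 : q b * a⁻¹ = a⁻¹ * q b := hcen _ (hq.1 b) a⁻¹
    rw [hq.2.2, mul_inv_rev, mul_assoc (q a * q b), e1, commutatorElement_def]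
    calc q a * q b * (b⁻¹ * a⁻¹ * (a * b * a⁻¹ * b⁻¹))
        = q a * (q b * a⁻¹) * b⁻¹ := by group
      _ = q a * (a⁻¹ * q b) * b⁻¹ := by rw [e2]
      _ = q a * a⁻¹ * (q b * b⁻¹) := by group

end SymmQAux

/-- Let `H` be a group, `C ≤ Z(H)` with `A := H/C` abelian. Then
`σ ↦ q_σ`, `q_σ(h) := h·σ(h)` (which lies in `C`), is a bijection from the set of
symmetric structures on `H` onto the set of maps `q : H → C` with `q(c) = c²` on `C`
and `q(h₁h₂) = q(h₁)q(h₂)⁅h₁,h₂⁆`; the inverse bijection sends `q` to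
`σ_q(h) := q(h)·h⁻¹`. -/
theorem symmetric_structures_biject_with_quadratic_maps
    {H : Type*} [Group H] (C : Subgroup H) [C.Normal]
    (hC : C ≤ Subgroup.center H)
    (hA : ∀ a b : H ⧸ C, a * b = b * a) :
    ∃ e : {σ : H ≃* H // IsSymmStruct C σ} ≃ {q : H → H // IsQMap C q},
      (∀ (σ : {σ : H ≃* H // IsSymmStruct C σ}) (h : H), (e σ).1 h = h * σ.1 h) ∧
      (∀ (q : {q : H → H // IsQMap C q}) (h : H), (e.symm q).1 h = q.1 h * h⁻¹) := by
  have hcen : ∀ x ∈ C, ∀ y : H, x * y = y * x := fun x hx y =>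
    (Subgroup.mem_center_iff.mp (hC hx) y).symm
  have hcomm : ∀ a b : H, ⁅a, b⁆ ∈ C := by
    intro a b
    rw [← QuotientGroup.eq_one_iff]
    have h1 : (QuotientGroup.mk ⁅a, b⁆ : H ⧸ C) =
        ⁅(QuotientGroup.mk a : H ⧸ C), (QuotientGroup.mk b : H ⧸ C)⁆ :=
      map_commutatorElement (QuotientGroup.mk' C) a b
    rw [h1]
    exact commutatorElement_eq_one_iff_mul_comm.mpr (hA _ _)
  -- forward direction: `σ ↦ q_σ` is a quadratic map
  have fwd : ∀ σ : H ≃* H, IsSymmStruct C σ → IsQMap C (fun h => h * σ h) := by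
    intro σ hσ
    have hmem : ∀ h : H, h * σ h ∈ C := by
      intro h
      rw [← QuotientGroup.eq_one_iff]
      have h2 : (QuotientGroup.mk (h * σ h) : H ⧸ C) =
          QuotientGroup.mk h * QuotientGroup.mk (σ h) := rfl
      rw [h2, hσ.2.2 h, mul_inv_cancel]
    refine ⟨hmem, ?_, ?_⟩
    · intro c hc
      simp only [hσ.2.1 c hc, sq]
    · intro a b
      simp only [map_mul]
      have ha : ∀ y : H, (a * σ a) * y = y * (a * σ a) := hcen _ (hmem a)
      have hsa : σ a = a⁻¹ * (a * σ a) := by group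
      have hsb : σ b = b⁻¹ * (b * σ b) := by group
      calc a * b * (σ a * σ b)
          = a * b * (a⁻¹ * (a * σ a) * (b⁻¹ * (b * σ b))) := by rw [← hsa, ← hsb]
        _ = a * b * a⁻¹ * ((a * σ a) * b⁻¹) * (b * σ b) := by group
        _ = a * b * a⁻¹ * (b⁻¹ * (a * σ a)) * (b * σ b) := by rw [ha b⁻¹]
        _ = a * b * a⁻¹ * b⁻¹ * ((a * σ a) * (b * σ b)) := by group
        _ = ⁅a, b⁆ * ((a * σ a) * (b * σ b)) := by rw [← commutatorElement_def]
        _ = (a * σ a) * (b * σ b) * ⁅a, b⁆ := hcen _ (hcomm a b) _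
  -- backward direction: `σ_q` is a symmetric structure
  have bwd : ∀ (q : H → H) (hq : IsQMap C q),
      IsSymmStruct C (SymmQAux.sigmaOfQ hC hcomm q hq) := by
    intro q hq
    refine ⟨fun h => (SymmQAux.sigmaOfQ hC hcomm q hq).left_inv h, ?_, ?_⟩
    · intro c hc
      show q c * c⁻¹ = c
      rw [hq.2.1 c hc, sq, mul_inv_cancel_right]
    · intro h
      show (QuotientGroup.mk (q h * h⁻¹) : H ⧸ C) = (QuotientGroup.mk h)⁻¹
      have h3 : (QuotientGroup.mk (q h) : H ⧸ C) = 1 :=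
        (QuotientGroup.eq_one_iff _).mpr (hq.1 h)
      rw [show (QuotientGroup.mk (q h * h⁻¹) : H ⧸ C) =
        QuotientGroup.mk (q h) * (QuotientGroup.mk h)⁻¹ from rfl, h3, one_mul]
  refine ⟨⟨fun σ => ⟨fun h => h * σ.1 h, fwd σ.1 σ.2⟩,
      fun q => ⟨SymmQAux.sigmaOfQ hC hcomm q.1 q.2, bwd q.1 q.2⟩, ?_, ?_⟩,
      fun σ h => rfl, fun q h => rfl⟩
  · intro σ
    apply Subtype.ext
    apply MulEquiv.ext
    intro h
    show (h * σ.1 h) * h⁻¹ = σ.1 h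
    rw [hcen _ ((fwd σ.1 σ.2).1 h) h⁻¹, inv_mul_cancel_left]
  · intro q
    apply Subtype.ext
    funext h
    show h * (q.1 h * h⁻¹) = q.1 h
    rw [← mul_assoc, ← hcen _ (q.2.1 h) h, mul_inv_cancel_right]
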